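/- Let W be an integral domain and E(z) = z^e + p·θ(z) ∈ W[[z]] with θ(0) a unit and p ≠ 0 in W. If f ∈ W[[z]] lies in the ideal generated by E(z) and f ≡ E(z) modulo (z^{e+1}), then f = u·E(z) for some unit u of W[[z]] with u ≡ 1 modulo (z). -/

import Mathlib

open PowerSeries

/-- Let `W` be a local integral domain and `E(z) = z^e + p·θ(z) ∈ W[[z]]`
with `θ(0)` a unit, `p ≠ 0` in `W` and `p` in the maximal ideal (a non-unit).
If `f ∈ W[[z]]` lies in the ideal generated by `E(z)` and `f ≡ E(z)` modulo `(z^{e+1})`,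
then `f = u·E(z)` for some unit `u` of `W[[z]]` with `u ≡ 1` modulo `(z)`. -/
theorem eisenstein_associate_unit
    (W : Type*) [CommRing W] [IsDomain W] [IsLocalRing W]
    (p : W) (hp : p ≠ 0) (hpu : ¬ IsUnit p)
    (e : ℕ) (he : 1 ≤ e)
    (θ : PowerSeries W) (hθ : IsUnit (PowerSeries.constantCoeff θ))
    (E : PowerSeries W)
    (hE : E = PowerSeries.X ^ e + PowerSeries.C p * θ)
    (f : PowerSeries W)
    (hf1 : f ∈ Ideal.span {E})
    (hf2 : f - E ∈ Ideal.span {(PowerSeries.X : PowerSeries W) ^ (e + 1)}) :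
    ∃ u : (PowerSeries W)ˣ,
      f = (u : PowerSeries W) * E ∧
        (u : PowerSeries W) - 1 ∈ Ideal.span {(PowerSeries.X : PowerSeries W)} := by
  rw [Ideal.mem_span_singleton] at hf1 hf2
  obtain ⟨g, hg⟩ := hf1
  obtain ⟨h, hh⟩ := hf2
  -- constant coefficient of E
  have hE0 : constantCoeff E ≠ 0 := by
    have : constantCoeff E = p * constantCoeff θ := by
      simp [hE, map_pow, constantCoeff_X, zero_pow (by omega : e ≠ 0)]
    rw [this]
    exact mul_ne_zero hp (fun h0 => by rw [h0] at hθ; exact not_isUnit_zero hθ)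
  -- constant coefficient of g is 1
  have hgE : E * (g - 1) = X ^ (e + 1) * h := by
    rw [mul_sub, mul_one, ← hg]; linear_combination hh
  have hg0 : constantCoeff (g - 1) = 0 := by
    have := congrArg (constantCoeff) hgE
    simp only [map_mul, map_pow, constantCoeff_X, zero_pow (by omega : e + 1 ≠ 0),
      zero_mul] at this
    rcases mul_eq_zero.mp this with h1 | h2
    · exact absurd h1 hE0
    · exact h2
  have hg1 : constantCoeff g = 1 := by
    have := hg0; rw [map_sub, map_one, sub_eq_zero] at this; exact this
  have hu : IsUnit g := isUnit_iff_constantCoeff.mpr (by rw [hg1]; exact isUnit_one)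
  obtain ⟨u, hu'⟩ := hu
  refine ⟨u, by rw [hu', hg, mul_comm], ?_⟩
  rw [Ideal.mem_span_singleton, X_dvd_iff, map_sub, map_one, hu', hg1, sub_self]
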